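/- Let d₁, d₂ be anticommuting differentials (d₁²=d₂²=0, d₁d₂=-d₂d₁) on a graded Lie algebra of local multivectors arising from a compatible bihamiltonian pair, and let X₁,...,X_N be vector fields satisfying d₁d₂X_m = (1/2)Σ_{i=1}^{m-1}[d₁X_i, d₁X_{m-i}] for m = 1,...,N. Define Q = (1/2)Σ_{i=1}^N [d₁X_i, d₁X_{N+1-i}]. Then d₁Q = 0 and d₂Q = 0. -/

import Mathlib

/-- In the graded Lie algebra of local multivectors with compatible Poisson
bivectors `ω₁, ω₂` (so `[ω₁,ω₁] = [ω₂,ω₂] = [ω₁,ω₂] = 0`, with `d_a = [ω_a, ·]`),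
if the vector fields `X₁, …, X_N ∈ Λ¹` satisfy
`d₁d₂X_m = (1/2)∑_{i=1}^{m-1}[d₁X_i, d₁X_{m-i}]` for `m = 1, …, N`, then the
obstruction `Q = (1/2)∑_{i=1}^N [d₁X_i, d₁X_{N+1-i}]` satisfies
`d₁Q = 0` and `d₂Q = 0`. -/
theorem obstruction_is_closed
    {Λ : Type*} [AddCommGroup Λ] [Module ℝ Λ]
    (L : ℕ → Submodule ℝ Λ) (B : Λ →ₗ[ℝ] Λ →ₗ[ℝ] Λ)
    (hgrade : ∀ k l a b, a ∈ L k → b ∈ L l → B a b ∈ L (k + l - 1))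
    (hanti : ∀ k l a b, a ∈ L k → b ∈ L l → B a b = ((-1 : ℝ) ^ (k * l)) • B b a)
    (hjac : ∀ k l m a b c, a ∈ L k → b ∈ L l → c ∈ L m →
      ((-1 : ℝ) ^ (k * m)) • B (B a b) c + ((-1 : ℝ) ^ (k * l)) • B (B b c) a +
        ((-1 : ℝ) ^ (l * m)) • B (B c a) b = 0)
    (ω₁ ω₂ : Λ) (hω₁ : ω₁ ∈ L 2) (hω₂ : ω₂ ∈ L 2)
    (h11 : B ω₁ ω₁ = 0) (h22 : B ω₂ ω₂ = 0) (h12 : B ω₁ ω₂ = 0)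
    (N : ℕ) (X : ℕ → Λ) (hX : ∀ i, X i ∈ L 1)
    (heq : ∀ m, 1 ≤ m → m ≤ N →
      B ω₁ (B ω₂ (X m)) =
        (1 / 2 : ℝ) • ∑ i ∈ Finset.Ico 1 m, B (B ω₁ (X i)) (B ω₁ (X (m - i)))) :
    B ω₁ ((1 / 2 : ℝ) • ∑ i ∈ Finset.Icc 1 N, B (B ω₁ (X i)) (B ω₁ (X (N + 1 - i)))) = 0 ∧
    B ω₂ ((1 / 2 : ℝ) • ∑ i ∈ Finset.Icc 1 N, B (B ω₁ (X i)) (B ω₁ (X (N + 1 - i)))) = 0 := by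
  classical
  set Y : ℕ → Λ := fun i => B ω₁ (X i) with hYdef
  have flip : ∀ k l a b, a ∈ L k → b ∈ L l → Even (k * l) → B a b = B b a := by
    intro k l a b ha hb he
    rw [hanti k l a b ha hb, he.neg_one_pow, one_smul]
  have hY : ∀ i, Y i ∈ L 2 := by
    intro i
    have := hgrade 2 1 ω₁ (X i) hω₁ (hX i)
    simpa using this
  -- d₁ d₁ X = 0
  have hd1d1 : ∀ i, B ω₁ (Y i) = 0 := by
    intro i
    have hj := hjac 2 2 1 ω₁ ω₁ (X i) hω₁ hω₁ (hX i)
    have ha1 : B (X i) ω₁ = Y i := flip 1 2 (X i) ω₁ (hX i) hω₁ (by decide)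
    have ha2 : B (Y i) ω₁ = B ω₁ (Y i) := flip 2 2 (Y i) ω₁ (hY i) hω₁ (by decide)
    simp only [h11, map_zero, LinearMap.zero_apply, ha1, ha2] at hj
    norm_num at hj
    have h2 : (2 : ℝ) • B ω₁ (Y i) = 0 := by rw [two_smul]; rw [show B (B ω₁ (X i)) ω₁ = B ω₁ (Y i) from ha2] at hj; linear_combination (norm := abel) hj
    exact (smul_eq_zero.mp h2).resolve_left (by norm_num)
  -- d₂ d₁ X = - d₁ d₂ X
  have hcomm : ∀ i, B ω₂ (Y i) = - B ω₁ (B ω₂ (X i)) := by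
    intro i
    have hj := hjac 2 2 1 ω₁ ω₂ (X i) hω₁ hω₂ (hX i)
    have hm : B ω₂ (X i) ∈ L 2 := by
      have := hgrade 2 1 ω₂ (X i) hω₂ (hX i); simpa using this
    have ha1 : B (X i) ω₁ = Y i := flip 1 2 (X i) ω₁ (hX i) hω₁ (by decide)
    have ha2 : B (B ω₂ (X i)) ω₁ = B ω₁ (B ω₂ (X i)) := flip 2 2 (B ω₂ (X i)) ω₁ hm hω₁ (by decide)
    have ha3 : B (Y i) ω₂ = B ω₂ (Y i) := flip 2 2 (Y i) ω₂ (hY i) hω₂ (by decide)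
    simp only [h12, map_zero, LinearMap.zero_apply, ha1, ha2, ha3] at hj
    norm_num at hj
    linear_combination (norm := abel) hj
  -- graded Leibniz rule for degree 2 elements
  have hLeib : ∀ ω a b, ω ∈ L 2 → a ∈ L 2 → b ∈ L 2 →
      B ω (B a b) = - B (B ω a) b - B a (B ω b) := by
    intro ω a b hω ha hb
    have hj := hjac 2 2 2 ω a b hω ha hb
    have hab : B a b ∈ L 3 := by have := hgrade 2 2 a b ha hb; simpa using this
    have hωb : B ω b ∈ L 3 := by have := hgrade 2 2 ω b hω hb; simpa using this
    have ha1 : B (B a b) ω = B ω (B a b) := flip 3 2 (B a b) ω hab hω (by decide)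
    have ha2 : B b ω = B ω b := flip 2 2 b ω hb hω (by decide)
    have ha3 : B (B ω b) a = B a (B ω b) := flip 3 2 (B ω b) a hωb ha (by decide)
    simp only [ha1, ha2, ha3] at hj
    norm_num at hj
    linear_combination (norm := abel) hj
  -- Jacobi in degree 2
  have hJ2 : ∀ a b c, a ∈ L 2 → b ∈ L 2 → c ∈ L 2 →
      B (B a b) c + B (B b c) a + B (B c a) b = 0 := by
    intro a b c ha hb hc
    have hj := hjac 2 2 2 a b c ha hb hc
    norm_num at hj
    exact hj
  -- swap lemma: deg 2 vs deg 3
  have hswap : ∀ a w, a ∈ L 2 → w ∈ L 3 → B a w = B w a := fun a w ha hw =>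
    flip 2 3 a w ha hw (by decide)
  constructor
  · rw [map_smul, map_sum]
    have : ∀ i ∈ Finset.Icc 1 N, B ω₁ (B (Y i) (Y (N + 1 - i))) = 0 := by
      intro i _
      rw [hLeib ω₁ (Y i) (Y (N + 1 - i)) hω₁ (hY i) (hY (N + 1 - i)), hd1d1, hd1d1]
      simp
    rw [Finset.sum_congr rfl this]
    simp
  · rw [map_smul, map_sum]
    -- Leibniz for each term
    have step1 : ∀ i ∈ Finset.Icc 1 N,
        B ω₂ (B (Y i) (Y (N + 1 - i))) =
          - B (B ω₂ (Y i)) (Y (N + 1 - i)) - B (B ω₂ (Y (N + 1 - i))) (Y i) := by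
      intro i _
      rw [hLeib ω₂ (Y i) (Y (N + 1 - i)) hω₂ (hY i) (hY (N + 1 - i))]
      congr 1
      rw [hswap (Y i) (B ω₂ (Y (N + 1 - i))) (hY i)
        (by have := hgrade 2 2 ω₂ (Y (N + 1 - i)) hω₂ (hY (N + 1 - i)); simpa using this)]
    have e1 := Finset.sum_congr rfl step1
    have e2 : ∑ i ∈ Finset.Icc 1 N,
        (- B (B ω₂ (Y i)) (Y (N + 1 - i)) - B (B ω₂ (Y (N + 1 - i))) (Y i)) =
        - (∑ i ∈ Finset.Icc 1 N, B (B ω₂ (Y i)) (Y (N + 1 - i)))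
          - ∑ i ∈ Finset.Icc 1 N, B (B ω₂ (Y (N + 1 - i))) (Y i) := by
      rw [Finset.sum_sub_distrib, Finset.sum_neg_distrib]
    have step2 : ∑ i ∈ Finset.Icc 1 N, B (B ω₂ (Y (N + 1 - i))) (Y i) =
        ∑ i ∈ Finset.Icc 1 N, B (B ω₂ (Y i)) (Y (N + 1 - i)) := by
      refine Finset.sum_nbij' (fun i => N + 1 - i) (fun i => N + 1 - i) ?_ ?_ ?_ ?_ ?_
      · intro a ha; simp only [Finset.mem_Icc] at *; omega
      · intro a ha; simp only [Finset.mem_Icc] at *; omega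
      · intro a ha; simp only [Finset.mem_Icc] at ha; omega
      · intro a ha; simp only [Finset.mem_Icc] at ha; omega
      · intro a ha
        simp only [Finset.mem_Icc] at ha
        have h1 : N + 1 - (N + 1 - a) = a := by omega
        rw [h1]
    have step3 : ∀ i ∈ Finset.Icc 1 N,
        B (B ω₂ (Y i)) (Y (N + 1 - i)) =
          (-(1 / 2 : ℝ)) • ∑ p ∈ Finset.Ico 1 i, B (B (Y p) (Y (i - p))) (Y (N + 1 - i)) := by
      intro i hi
      simp only [Finset.mem_Icc] at hi
      rw [hcomm i, heq i hi.1 hi.2]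
      simp only [map_neg, map_smul, map_sum, LinearMap.neg_apply, LinearMap.smul_apply,
        LinearMap.sum_apply, neg_smul]
      rfl
    set S1 : Λ := ∑ i ∈ Finset.Icc 1 N, ∑ p ∈ Finset.Ico 1 i,
      B (B (Y p) (Y (i - p))) (Y (N + 1 - i)) with hS1def
    have hS1 : S1 = 0 := by
      set T := (Finset.Icc 1 N).sigma (fun i => Finset.Ico 1 i) with hT
      have hmemT : ∀ x : (_ : ℕ) × ℕ, x ∈ T ↔ (1 ≤ x.2 ∧ x.2 < x.1 ∧ x.1 ≤ N) := by
        intro x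
        simp only [hT, Finset.mem_sigma, Finset.mem_Icc, Finset.mem_Ico]
        omega
      -- the three cyclic sums
      have hS2 : ∑ x ∈ T, B (B (Y x.2) (Y (x.1 - x.2))) (Y (N + 1 - x.1)) =
          ∑ x ∈ T, B (B (Y (x.1 - x.2)) (Y (N + 1 - x.1))) (Y x.2) := by
        refine Finset.sum_nbij' (fun x => ⟨x.2 + (N + 1) - x.1, N + 1 - x.1⟩)
          (fun x => ⟨N + 1 - x.2, x.1 - x.2⟩) ?_ ?_ ?_ ?_ ?_
        · intro a ha; rw [hmemT] at *; dsimp only at *; omega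
        · intro a ha; rw [hmemT] at *; dsimp only at *; omega
        · intro a ha; rw [hmemT] at ha
          have h1 : a.2 + (N + 1) - a.1 ≤ N := by omega
          ext <;> simp <;> omega
        · intro a ha; rw [hmemT] at ha
          ext <;> simp <;> omega
        · intro a ha; rw [hmemT] at ha
          have e1 : N + 1 - (a.2 + (N + 1) - a.1) = a.1 - a.2 := by omega
          have e2 : (a.2 + (N + 1) - a.1) - (N + 1 - a.1) = a.2 := by omega
          simp only [e1, e2]
      have hS3 : ∑ x ∈ T, B (B (Y x.2) (Y (x.1 - x.2))) (Y (N + 1 - x.1)) =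
          ∑ x ∈ T, B (B (Y (N + 1 - x.1)) (Y x.2)) (Y (x.1 - x.2)) := by
        refine Finset.sum_nbij' (fun x => ⟨N + 1 - x.2, x.1 - x.2⟩)
          (fun x => ⟨x.2 + (N + 1) - x.1, N + 1 - x.1⟩) ?_ ?_ ?_ ?_ ?_
        · intro a ha; rw [hmemT] at *; dsimp only at *; omega
        · intro a ha; rw [hmemT] at *; dsimp only at *; omega
        · intro a ha; rw [hmemT] at ha
          ext <;> simp <;> omega
        · intro a ha; rw [hmemT] at ha
          have h1 : a.2 + (N + 1) - a.1 ≤ N := by omega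
          ext <;> simp <;> omega
        · intro a ha; rw [hmemT] at ha
          have e1 : N + 1 - (N + 1 - a.2) = a.2 := by omega
          have e2 : (N + 1 - a.2) - (a.1 - a.2) = N + 1 - a.1 := by omega
          simp only [e1, e2]
      have hsum3 : (3 : ℝ) • (∑ x ∈ T, B (B (Y x.2) (Y (x.1 - x.2))) (Y (N + 1 - x.1))) = 0 := by
        have : (3 : ℝ) • (∑ x ∈ T, B (B (Y x.2) (Y (x.1 - x.2))) (Y (N + 1 - x.1))) =
            ∑ x ∈ T, (B (B (Y x.2) (Y (x.1 - x.2))) (Y (N + 1 - x.1)) +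
              B (B (Y (x.1 - x.2)) (Y (N + 1 - x.1))) (Y x.2) +
              B (B (Y (N + 1 - x.1)) (Y x.2)) (Y (x.1 - x.2))) := by
          rw [Finset.sum_add_distrib, Finset.sum_add_distrib, ← hS2, ← hS3]
          module
        rw [this]
        refine Finset.sum_eq_zero fun x _ => ?_
        exact hJ2 (Y x.2) (Y (x.1 - x.2)) (Y (N + 1 - x.1)) (hY _) (hY _) (hY _)
      have hz := (smul_eq_zero.mp hsum3).resolve_left (by norm_num)
      have hsig : S1 = ∑ x ∈ T, B (B (Y x.2) (Y (x.1 - x.2))) (Y (N + 1 - x.1)) :=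
        (Finset.sum_sigma (Finset.Icc 1 N) (fun i => Finset.Ico 1 i)
          (fun x => B (B (Y x.2) (Y (x.1 - x.2))) (Y (N + 1 - x.1)))).symm
      rw [hsig]
      exact hz
    have e4 : ∑ i ∈ Finset.Icc 1 N, B (B ω₂ (Y i)) (Y (N + 1 - i)) = (-(1 / 2) : ℝ) • S1 := by
      rw [Finset.sum_congr rfl step3, ← Finset.smul_sum]
    rw [e1, e2, step2, e4, hS1]
    simp
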